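/- Let u : ℝ/2qπℤ → ℝ be C¹ with only simple zeros. Then the winding number of the curve t ↦ u'(t) + i·u(t) around the origin over one period equals p, where 2p is the number of zeros of u in one period. -/

import Mathlib

namespace Stmt3Aux
open Real Set Filter Topology

variable {u θ r : ℝ → ℝ}

lemma zero_theta (hr : ∀ t, 0 < r t) (hsin : ∀ t, u t = r t * Real.sin (θ t))
    {t : ℝ} (h : u t = 0) : ∃ n : ℤ, θ t = n * π := by
  have := hsin t
  rw [h] at this
  have hs : Real.sin (θ t) = 0 := by
    rcases mul_eq_zero.1 this.symm with h' | h'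
    · exact absurd h' (ne_of_gt (hr t))
    · exact h'
  obtain ⟨n, hn⟩ := Real.sin_eq_zero_iff.1 hs
  exact ⟨n, hn.symm⟩


lemma ne_zero_theta (hr : ∀ t, 0 < r t) (hsin : ∀ t, u t = r t * Real.sin (θ t))
    {t : ℝ} (n : ℤ) (h : u t ≠ 0) : θ t ≠ n * π := by
  intro he
  exact h (by rw [hsin t, he, Real.sin_int_mul_pi, mul_zero])


lemma cross (hu : Differentiable ℝ u) (hθ : Continuous θ)
    (hr : ∀ t, 0 < r t) (hsin : ∀ t, u t = r t * Real.sin (θ t))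
    (hcos : ∀ t, deriv u t = r t * Real.cos (θ t))
    (hsimple : ∀ t, u t = 0 → deriv u t ≠ 0)
    {t₀ : ℝ} (h0 : u t₀ = 0) :
    ∃ ε > 0, (∀ t, t₀ - ε < t → t < t₀ → θ t₀ - π/2 < θ t ∧ θ t < θ t₀) ∧
             (∀ t, t₀ < t → t < t₀ + ε → θ t₀ < θ t ∧ θ t < θ t₀ + π/2) := by
  obtain ⟨m, hm⟩ := zero_theta hr hsin h0
  have hr0 := hr t₀
  have hsin0 : Real.sin (θ t₀) = 0 := by rw [hm]; exact Real.sin_int_mul_pi m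
  have hcos0 : Real.cos (θ t₀) = (-1 : ℝ) ^ m := by
    rw [hm]
    have := Real.cos_int_mul_pi_sub 0 m
    simpa using this
  have hd0 : deriv u t₀ = r t₀ * (-1 : ℝ) ^ m := by rw [hcos t₀, hcos0]
  have h5 : ((-1 : ℝ)) ^ m * ((-1) : ℝ) ^ m = 1 := by
    rw [← zpow_add₀ (by norm_num : ((-1) : ℝ) ≠ 0), ← two_mul, zpow_mul]
    norm_num
  -- sin (θ t) = (-1)^m * sin (θ t - θ t₀)
  have key : ∀ t, u t = r t * ((-1 : ℝ) ^ m * Real.sin (θ t - θ t₀)) := by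
    intro t
    have : Real.sin (θ t) = (-1 : ℝ) ^ m * Real.sin (θ t - θ t₀) := by
      have h1 : θ t = θ t₀ + (θ t - θ t₀) := by ring
      rw [h1, Real.sin_add, hsin0, hcos0]; ring
    rw [hsin t, this]
  -- slope convergence
  have hslope : Tendsto (fun t => u t / (t - t₀)) (𝓝[≠] t₀) (𝓝 (deriv u t₀)) := by
    have := hasDerivAt_iff_tendsto_slope.1 (hu t₀).hasDerivAt
    refine this.congr' ?_
    filter_upwards [self_mem_nhdsWithin] with t ht
    simp [slope, h0, div_eq_inv_mul]
  -- eventually the sign of u t * (-1)^m matches sign of (t - t₀)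
  have hpos : ∀ᶠ t in 𝓝[≠] t₀, 0 < (u t * (-1 : ℝ) ^ m) / (t - t₀) := by
    have h2 : Tendsto (fun t => (u t / (t - t₀)) * (-1 : ℝ) ^ m) (𝓝[≠] t₀)
        (𝓝 (deriv u t₀ * (-1 : ℝ) ^ m)) := hslope.mul_const _
    have h3 : deriv u t₀ * (-1 : ℝ) ^ m = r t₀ := by
      rw [hd0, mul_assoc, h5, mul_one]
    rw [h3] at h2
    filter_upwards [h2.eventually (eventually_gt_nhds hr0)] with t ht
    calc (0:ℝ) < u t / (t - t₀) * (-1:ℝ)^m := ht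
      _ = u t * (-1:ℝ)^m / (t - t₀) := by ring
  have hsmall : ∀ᶠ t in 𝓝 t₀, |θ t - θ t₀| < π / 2 := by
    have : Tendsto (fun t => |θ t - θ t₀|) (𝓝 t₀) (𝓝 0) := by
      have := (hθ.tendsto t₀).sub_const (θ t₀)
      simpa using this.abs
    exact this.eventually (eventually_lt_nhds (by positivity))
  have hall : ∀ᶠ t in 𝓝 t₀, t ≠ t₀ →
      (0 < (u t * (-1 : ℝ) ^ m) / (t - t₀) ∧ |θ t - θ t₀| < π / 2) := by
    have h4 := eventually_nhdsWithin_iff.1 hpos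
    filter_upwards [h4, hsmall] with t h5 h6 h7
    exact ⟨h5 h7, h6⟩
  obtain ⟨ε, hε, hball⟩ := Metric.eventually_nhds_iff.1 hall
  refine ⟨ε, hε, ?_, ?_⟩
  · intro t ht1 ht2
    have hdist : dist t t₀ < ε := by rw [Real.dist_eq, abs_lt]; constructor <;> linarith
    obtain ⟨hsgn, hsm⟩ := hball hdist (ne_of_lt ht2)
    -- t < t₀ : u t * (-1)^m < 0, so sin (θ t - θ t₀) < 0, so θ t - θ t₀ < 0
    have hneg : u t * (-1 : ℝ) ^ m < 0 := by
      by_contra h'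
      push_neg at h'
      have : (u t * (-1:ℝ)^m) / (t - t₀) ≤ 0 := div_nonpos_of_nonneg_of_nonpos h' (by linarith)
      linarith
    have hsinneg : Real.sin (θ t - θ t₀) < 0 := by
      have hrt := hr t
      have h6 : u t * (-1 : ℝ)^m = r t * Real.sin (θ t - θ t₀) := by
        rw [key t, show r t * ((-1 : ℝ)^m * Real.sin (θ t - θ t₀)) * (-1 : ℝ)^m
          = r t * Real.sin (θ t - θ t₀) * ((-1 : ℝ)^m * (-1)^m) from by ring, h5, mul_one]
      nlinarith [h6, hrt]
    have habs := abs_lt.1 hsm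
    have : θ t - θ t₀ < 0 := by
      by_contra h'
      push_neg at h'
      have : 0 ≤ Real.sin (θ t - θ t₀) :=
        Real.sin_nonneg_of_nonneg_of_le_pi h' (by linarith [Real.pi_pos])
      linarith
    constructor <;> linarith [habs.1]
  · intro t ht1 ht2
    have hdist : dist t t₀ < ε := by rw [Real.dist_eq, abs_lt]; constructor <;> linarith
    obtain ⟨hsgn, hsm⟩ := hball hdist (ne_of_gt ht1)
    have hposu : 0 < u t * (-1 : ℝ) ^ m := by
      by_contra h'
      push_neg at h'
      have : (u t * (-1:ℝ)^m) / (t - t₀) ≤ 0 := div_nonpos_of_nonpos_of_nonneg h' (by linarith)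
      linarith
    have hsinpos : 0 < Real.sin (θ t - θ t₀) := by
      have hrt := hr t
      have h6 : u t * (-1 : ℝ)^m = r t * Real.sin (θ t - θ t₀) := by
        rw [key t, show r t * ((-1 : ℝ)^m * Real.sin (θ t - θ t₀)) * (-1 : ℝ)^m
          = r t * Real.sin (θ t - θ t₀) * ((-1 : ℝ)^m * (-1)^m) from by ring, h5, mul_one]
      nlinarith [h6, hrt]
    have habs := abs_lt.1 hsm
    have : 0 < θ t - θ t₀ := by
      by_contra h'
      push_neg at h'
      have : Real.sin (θ t - θ t₀) ≤ 0 := by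
        apply Real.sin_nonpos_of_nonpos_of_neg_pi_le h'
        linarith [Real.pi_pos]
      linarith
    constructor <;> linarith [habs.2]

lemma isolated (hu : Differentiable ℝ u)
    (hsimple : ∀ t, u t = 0 → deriv u t ≠ 0)
    {t₀ : ℝ} (h0 : u t₀ = 0) :
    ∃ ε > 0, ∀ t, t₀ - ε < t → t < t₀ + ε → t ≠ t₀ → u t ≠ 0 := by
  have hd := hsimple t₀ h0
  have hslope : Tendsto (fun t => u t / (t - t₀)) (𝓝[≠] t₀) (𝓝 (deriv u t₀)) := by
    have := hasDerivAt_iff_tendsto_slope.1 (hu t₀).hasDerivAt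
    refine this.congr' ?_
    filter_upwards [self_mem_nhdsWithin] with t ht
    simp [slope, h0, div_eq_inv_mul]
  have hne : ∀ᶠ t in 𝓝[≠] t₀, u t / (t - t₀) ≠ 0 := hslope.eventually_ne hd
  have hall : ∀ᶠ t in 𝓝 t₀, t ≠ t₀ → u t / (t - t₀) ≠ 0 := eventually_nhdsWithin_iff.1 hne
  obtain ⟨ε, hε, hball⟩ := Metric.eventually_nhds_iff.1 hall
  refine ⟨ε, hε, fun t ht1 ht2 ht3 hu0 => ?_⟩
  have hdist : dist t t₀ < ε := by rw [Real.dist_eq, abs_lt]; constructor <;> linarith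
  exact hball hdist ht3 (by rw [hu0, zero_div])


lemma band (hθ : Continuous θ)
    (hr : ∀ t, 0 < r t) (hsin : ∀ t, u t = r t * Real.sin (θ t))
    {a b : ℝ} {n : ℤ}
    (hmid : ∀ t, a ≤ t → t ≤ b → u t ≠ 0)
    (ha1 : (n : ℝ) * π < θ a) (ha2 : θ a < (n + 1 : ℤ) * π) :
    ∀ t, a ≤ t → t ≤ b → (n : ℝ) * π < θ t ∧ θ t < (n + 1 : ℤ) * π := by
  intro t hat htb
  constructor
  · by_contra h'
    push_neg at h'
    have : (n : ℝ) * π ∈ Icc (θ t) (θ a) := ⟨h', le_of_lt ha1⟩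
    obtain ⟨t', ht', hval⟩ := intermediate_value_Icc' hat (hθ.continuousOn) this
    exact ne_zero_theta hr hsin n (hmid t' ht'.1 (le_trans ht'.2 htb)) hval
  · by_contra h'
    push_neg at h'
    have : ((n + 1 : ℤ) : ℝ) * π ∈ Icc (θ a) (θ t) := ⟨le_of_lt ha2, h'⟩
    obtain ⟨t', ht', hval⟩ := intermediate_value_Icc hat (hθ.continuousOn) this
    exact ne_zero_theta hr hsin (n+1) (hmid t' ht'.1 (le_trans ht'.2 htb)) hval


lemma floor_band (hr : ∀ t, 0 < r t) (hsin : ∀ t, u t = r t * Real.sin (θ t))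
    {a : ℝ} (ha : u a ≠ 0) :
    (↑⌊θ a / π⌋ : ℝ) * π < θ a ∧ θ a < ((⌊θ a / π⌋ + 1 : ℤ) : ℝ) * π := by
  have hπ := Real.pi_pos
  have h1 : (↑⌊θ a / π⌋ : ℝ) ≤ θ a / π := Int.floor_le _
  have h2 : θ a / π < ⌊θ a / π⌋ + 1 := Int.lt_floor_add_one _
  have hne : θ a ≠ (↑⌊θ a / π⌋ : ℝ) * π := ne_zero_theta hr hsin _ ha
  constructor
  · have h3 : (↑⌊θ a / π⌋ : ℝ) * π ≤ θ a := (le_div_iff₀ hπ).1 h1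
    exact lt_of_le_of_ne h3 (Ne.symm hne)
  · push_cast
    calc θ a = (θ a / π) * π := by field_simp
      _ < (⌊θ a / π⌋ + 1) * π := by
          apply mul_lt_mul_of_pos_right _ hπ
          exact_mod_cast h2

lemma segmentA (hu : Differentiable ℝ u) (hθ : Continuous θ)
    (hr : ∀ t, 0 < r t) (hsin : ∀ t, u t = r t * Real.sin (θ t))
    (hcos : ∀ t, deriv u t = r t * Real.cos (θ t))
    (hsimple : ∀ t, u t = 0 → deriv u t ≠ 0)
    {a b : ℝ} (hab : a < b) (ha : u a = 0) (hb : u b = 0)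
    (hmid : ∀ t, a < t → t < b → u t ≠ 0) :
    θ b = θ a + π := by
  have hπ := Real.pi_pos
  obtain ⟨m, hm⟩ := zero_theta hr hsin ha
  obtain ⟨k, hk⟩ := zero_theta hr hsin hb
  obtain ⟨ε, hε, hL, hR⟩ := cross hu hθ hr hsin hcos hsimple ha
  obtain ⟨ε', hε', hL', hR'⟩ := cross hu hθ hr hsin hcos hsimple hb
  set t₁ := min (a + ε/2) ((a+b)/2) with ht₁def
  have ht₁a : a < t₁ := lt_min (by linarith) (by linarith)
  have ht₁b : t₁ < b := lt_of_le_of_lt (min_le_right _ _) (by linarith)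
  have ht₁ε : t₁ < a + ε := lt_of_le_of_lt (min_le_left _ _) (by linarith)
  have hbandall : ∀ t, a < t → t < b → (m:ℝ)*π < θ t ∧ θ t < ((m+1:ℤ):ℝ)*π := by
    intro t hta htb
    rcases le_or_gt t t₁ with h | h
    · have h5 := hR t hta (lt_of_le_of_lt h ht₁ε)
      refine ⟨by rw [← hm]; exact h5.1, ?_⟩
      push_cast
      calc θ t < θ a + π/2 := h5.2
        _ = (m:ℝ)*π + π/2 := by rw [hm]
        _ < ((m:ℝ)+1)*π := by linarith
    · have h5 := hR t₁ ht₁a ht₁ε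
      have h1 : (m:ℝ)*π < θ t₁ := by rw [← hm]; exact h5.1
      have h2 : θ t₁ < ((m+1:ℤ):ℝ)*π := by
        push_cast
        calc θ t₁ < θ a + π/2 := h5.2
          _ = (m:ℝ)*π + π/2 := by rw [hm]
          _ < ((m:ℝ)+1)*π := by linarith
      exact band hθ hr hsin
        (fun s hs1 hs2 => hmid s (lt_of_lt_of_le ht₁a hs1) (lt_of_le_of_lt hs2 htb))
        h1 h2 t (le_of_lt h) le_rfl
  set t₂ := max (b - ε'/2) ((a+b)/2) with ht₂def
  have ht₂a : a < t₂ := lt_of_lt_of_le (by linarith) (le_max_right _ _)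
  have ht₂b : t₂ < b := max_lt (by linarith) (by linarith)
  have ht₂ε : b - ε' < t₂ := lt_of_lt_of_le (by linarith) (le_max_left _ _)
  have hth2 := hL' t₂ ht₂ε ht₂b
  have hb2 := hbandall t₂ ht₂a ht₂b
  have hk1 : (m:ℝ)*π < (k:ℝ)*π := lt_trans hb2.1 (hk ▸ hth2.2)
  have hmk : m < k := by
    have := (mul_lt_mul_iff_of_pos_right hπ).1 hk1
    exact_mod_cast this
  have hkm : k < m + 2 := by
    have h6 : (k:ℝ)*π < ((m:ℝ)+2)*π := by
      have := hth2.1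
      rw [hk] at this
      push_cast at hb2
      linarith [hb2.2]
    have := (mul_lt_mul_iff_of_pos_right hπ).1 h6
    have : (k:ℝ) < (m:ℝ) + 2 := this
    exact_mod_cast this
  have hkeq : k = m + 1 := by omega
  rw [hk, hkeq, hm]
  push_cast
  ring


lemma segmentB (hu : Differentiable ℝ u) (hθ : Continuous θ)
    (hr : ∀ t, 0 < r t) (hsin : ∀ t, u t = r t * Real.sin (θ t))
    (hcos : ∀ t, deriv u t = r t * Real.cos (θ t))
    (hsimple : ∀ t, u t = 0 → deriv u t ≠ 0)
    {a b : ℝ} (hab : a < b) (hb : u b = 0)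
    (hmid : ∀ t, a ≤ t → t < b → u t ≠ 0) :
    θ a < θ b ∧ θ b < θ a + π := by
  have hπ := Real.pi_pos
  have hua : u a ≠ 0 := hmid a le_rfl hab
  obtain ⟨h1, h2⟩ := floor_band hr hsin hua
  set n := ⌊θ a / π⌋ with hndef
  obtain ⟨k, hk⟩ := zero_theta hr hsin hb
  obtain ⟨ε', hε', hL', hR'⟩ := cross hu hθ hr hsin hcos hsimple hb
  set t₂ := max (b - ε'/2) ((a+b)/2) with ht₂def
  have ht₂a : a ≤ t₂ := le_trans (by linarith) (le_max_right _ _)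
  have ht₂b : t₂ < b := max_lt (by linarith) (by linarith)
  have ht₂ε : b - ε' < t₂ := lt_of_lt_of_le (by linarith) (le_max_left _ _)
  have hb2 := band hθ hr hsin
    (fun s hs1 hs2 => hmid s hs1 (lt_of_le_of_lt hs2 ht₂b)) h1 h2 t₂ ht₂a le_rfl
  have hth2 := hL' t₂ ht₂ε ht₂b
  have hk1 : (n:ℝ)*π < (k:ℝ)*π := lt_trans hb2.1 (hk ▸ hth2.2)
  have hmk : n < k := by
    have := (mul_lt_mul_iff_of_pos_right hπ).1 hk1
    exact_mod_cast this
  have hkm : k < n + 2 := by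
    have h6 : (k:ℝ)*π < ((n:ℝ)+2)*π := by
      have := hth2.1
      rw [hk] at this
      push_cast at hb2
      linarith [hb2.2]
    have h7 : (k:ℝ) < (n:ℝ) + 2 := (mul_lt_mul_iff_of_pos_right hπ).1 h6
    exact_mod_cast h7
  have hkeq : k = n + 1 := by omega
  rw [hk, hkeq]
  push_cast at h1 h2 ⊢
  constructor <;> linarith


lemma segmentC (hu : Differentiable ℝ u) (hθ : Continuous θ)
    (hr : ∀ t, 0 < r t) (hsin : ∀ t, u t = r t * Real.sin (θ t))
    (hcos : ∀ t, deriv u t = r t * Real.cos (θ t))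
    (hsimple : ∀ t, u t = 0 → deriv u t ≠ 0)
    {a b : ℝ} (hab : a < b) (ha : u a = 0)
    (hmid : ∀ t, a < t → t ≤ b → u t ≠ 0) :
    θ a < θ b ∧ θ b < θ a + π := by
  have hπ := Real.pi_pos
  obtain ⟨m, hm⟩ := zero_theta hr hsin ha
  obtain ⟨ε, hε, hL, hR⟩ := cross hu hθ hr hsin hcos hsimple ha
  set t₁ := min (a + ε/2) ((a+b)/2) with ht₁def
  have ht₁a : a < t₁ := lt_min (by linarith) (by linarith)
  have ht₁b : t₁ < b := lt_of_le_of_lt (min_le_right _ _) (by linarith)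
  have ht₁ε : t₁ < a + ε := lt_of_le_of_lt (min_le_left _ _) (by linarith)
  have hbandall : ∀ t, a < t → t ≤ b → (m:ℝ)*π < θ t ∧ θ t < ((m+1:ℤ):ℝ)*π := by
    intro t hta htb
    rcases le_or_gt t t₁ with h | h
    · have h5 := hR t hta (lt_of_le_of_lt h ht₁ε)
      refine ⟨by rw [← hm]; exact h5.1, ?_⟩
      push_cast
      calc θ t < θ a + π/2 := h5.2
        _ = (m:ℝ)*π + π/2 := by rw [hm]
        _ < ((m:ℝ)+1)*π := by linarith
    · have h5 := hR t₁ ht₁a ht₁ε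
      have h1 : (m:ℝ)*π < θ t₁ := by rw [← hm]; exact h5.1
      have h2 : θ t₁ < ((m+1:ℤ):ℝ)*π := by
        push_cast
        calc θ t₁ < θ a + π/2 := h5.2
          _ = (m:ℝ)*π + π/2 := by rw [hm]
          _ < ((m:ℝ)+1)*π := by linarith
      exact band hθ hr hsin
        (fun s hs1 hs2 => hmid s (lt_of_lt_of_le ht₁a hs1) (le_trans hs2 htb))
        h1 h2 t (le_of_lt h) le_rfl
  have := hbandall b hab le_rfl
  rw [hm]
  push_cast at this
  constructor <;> linarith [this.1, this.2]


lemma segmentD (hθ : Continuous θ)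
    (hr : ∀ t, 0 < r t) (hsin : ∀ t, u t = r t * Real.sin (θ t))
    {a b : ℝ} (hab : a ≤ b) (hmid : ∀ t, a ≤ t → t ≤ b → u t ≠ 0) :
    |θ b - θ a| < π := by
  have hπ := Real.pi_pos
  have hua : u a ≠ 0 := hmid a le_rfl hab
  obtain ⟨h1, h2⟩ := floor_band hr hsin hua
  have hb2 := band hθ hr hsin hmid h1 h2 b hab le_rfl
  rw [abs_lt]
  push_cast at h1 h2 hb2
  constructor <;> linarith [hb2.1, hb2.2]

lemma zeros_finite (hu : Differentiable ℝ u)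
    (hsimple : ∀ t, u t = 0 → deriv u t ≠ 0) (a b : ℝ) :
    ({t | t ∈ Set.Icc a b ∧ u t = 0}).Finite := by
  have hcont : Continuous u := hu.continuous
  have hS : {t | t ∈ Set.Icc a b ∧ u t = 0} = Set.Icc a b ∩ u ⁻¹' {0} := by
    ext t; simp [Set.mem_Icc]
  rw [hS]
  apply IsCompact.finite
  · exact (isCompact_Icc).inter_right (isClosed_singleton.preimage hcont)
  · rw [isDiscrete_iff_discreteTopology, discreteTopology_subtype_iff]
    intro x hx
    rw [inf_principal_eq_bot]
    obtain ⟨ε, hε, hiso⟩ := isolated hu hsimple hx.2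
    rw [← Filter.eventually_mem_set, eventually_nhdsWithin_iff]
    filter_upwards [Metric.ball_mem_nhds x hε] with t ht htx
    intro hts
    have : t ≠ x := htx
    rw [Metric.mem_ball, Real.dist_eq, abs_lt] at ht
    exact hiso t (by linarith [ht.1]) (by linarith [ht.2]) this hts.2

lemma main_count (hu : Differentiable ℝ u) (hθ : Continuous θ)
    (hr : ∀ t, 0 < r t) (hsin : ∀ t, u t = r t * Real.sin (θ t))
    (hcos : ∀ t, deriv u t = r t * Real.cos (θ t))
    (hsimple : ∀ t, u t = 0 → deriv u t ≠ 0) :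
    ∀ (n : ℕ) (a b : ℝ), a ≤ b → u a = 0 → u b = 0 →
      ({t | t ∈ Set.Ioc a b ∧ u t = 0}).Finite →
      ({t | t ∈ Set.Ioc a b ∧ u t = 0}).ncard = n →
      θ b = θ a + n * π := by
  intro n
  induction n with
  | zero =>
    intro a b hab ha hb hfin hcard
    rcases eq_or_lt_of_le hab with h | h
    · rw [← h]; simp
    · exfalso
      have hbmem : b ∈ {t | t ∈ Set.Ioc a b ∧ u t = 0} := ⟨⟨h, le_rfl⟩, hb⟩
      have hne : ({t | t ∈ Set.Ioc a b ∧ u t = 0}).Nonempty := ⟨b, hbmem⟩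
      rw [(Set.ncard_eq_zero hfin)] at hcard
      exact hne.ne_empty hcard
  | succ n ih =>
    intro a b hab ha hb hfin hcard
    have hlt : a < b := by
      rcases eq_or_lt_of_le hab with h | h
      · exfalso
        subst h
        have : {t | t ∈ Set.Ioc a a ∧ u t = 0} = ∅ := by
          ext t
          simp only [Set.mem_setOf_eq, Set.mem_Ioc, Set.mem_empty_iff_false, iff_false, not_and]
          rintro ⟨h1, h2⟩ _; exact absurd (lt_of_lt_of_le h1 h2) (lt_irrefl a)
        rw [this, Set.ncard_empty] at hcard
        omega
      · exact h
    set S := {t | t ∈ Set.Ioc a b ∧ u t = 0} with hSdef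
    have hSne : S.Nonempty := ⟨b, ⟨⟨hlt, le_rfl⟩, hb⟩⟩
    set c := sInf S with hcdef
    have hcS : c ∈ S := hSne.csInf_mem hfin
    have hac : a < c := hcS.1.1
    have hcb : c ≤ b := hcS.1.2
    have huc : u c = 0 := hcS.2
    have hmid : ∀ t, a < t → t < c → u t ≠ 0 := by
      intro t h1 h2 h3
      have htS : t ∈ S := ⟨⟨h1, le_trans h2.le hcb⟩, h3⟩
      exact absurd (csInf_le hfin.bddBelow htS) (not_le.2 h2)
    have hstep : θ c = θ a + π := segmentA hu hθ hr hsin hcos hsimple hac ha huc hmid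
    set S' := {t | t ∈ Set.Ioc c b ∧ u t = 0} with hS'def
    have hSS : S = insert c S' := by
      ext t
      constructor
      · rintro ⟨⟨h1, h2⟩, h3⟩
        have hct : c ≤ t := csInf_le hfin.bddBelow ⟨⟨h1, h2⟩, h3⟩
        rcases eq_or_lt_of_le hct with h | h
        · exact Or.inl h.symm
        · exact Or.inr ⟨⟨h, h2⟩, h3⟩
      · rintro (rfl | ⟨⟨h1, h2⟩, h3⟩)
        · exact hcS
        · exact ⟨⟨lt_trans hac h1, h2⟩, h3⟩
    have hfin' : S'.Finite := hfin.subset (by rw [hSS]; exact Set.subset_insert _ _)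
    have hcnot : c ∉ S' := fun h => lt_irrefl c h.1.1
    have hcard' : S'.ncard = n := by
      rw [hSS, Set.ncard_insert_of_notMem hcnot hfin'] at hcard
      omega
    have hrec := ih c b hcb huc hb hfin' hcard'
    rw [hrec, hstep]
    push_cast
    ring

end Stmt3Aux

open Real Set Filter Topology

theorem stmt_3 (q : ℕ) (hq : 0 < q) (p : ℕ) (u : ℝ → ℝ)
    (hu : ContDiff ℝ 1 u)
    (hper : ∀ t, u (t + 2 * q * Real.pi) = u t)
    (hnz : ∀ t : ℝ, (u t, deriv u t) ≠ (0, 0))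
    (hsimple : ∀ t : ℝ, u t = 0 → deriv u t ≠ 0)
    (hzeros : ({t : ℝ | t ∈ Set.Ico (0 : ℝ) (2 * q * Real.pi) ∧ u t = 0}).ncard = 2 * p)
    (θ : ℝ → ℝ) (hθ : Continuous θ)
    (hlift : ∀ t : ℝ, Complex.ofReal (deriv u t) + Complex.I * Complex.ofReal (u t) =
        (‖Complex.ofReal (deriv u t) + Complex.I * Complex.ofReal (u t)‖ : ℂ) *
          Complex.exp (Complex.I * (θ t : ℂ))) :
    θ (2 * q * Real.pi) - θ 0 = 2 * Real.pi * p := by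
  have hπ := Real.pi_pos
  set L : ℝ := 2 * q * Real.pi with hLdef
  have hq1 : (1:ℝ) ≤ (q:ℝ) := by exact_mod_cast hq
  have hL : 0 < L := by rw [hLdef]; nlinarith
  have hud : Differentiable ℝ u := hu.differentiable one_ne_zero
  set r : ℝ → ℝ := fun t => ‖Complex.ofReal (deriv u t) + Complex.I * Complex.ofReal (u t)‖ with hrdef
  have hkey : ∀ t, 0 < r t ∧ u t = r t * Real.sin (θ t) ∧ deriv u t = r t * Real.cos (θ t) := by
    intro t
    have hfne : (Complex.ofReal (deriv u t) + Complex.I * Complex.ofReal (u t)) ≠ 0 := by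
      intro h
      have hre := congrArg Complex.re h
      have him := congrArg Complex.im h
      simp at hre him
      exact hnz t (by rw [him, hre])
    have hpos : 0 < r t := norm_pos_iff.2 hfne
    have h := hlift t
    rw [mul_comm Complex.I ((θ t : ℝ) : ℂ), Complex.exp_mul_I] at h
    have hre := congrArg Complex.re h
    have him := congrArg Complex.im h
    simp [Complex.cos_ofReal_re, Complex.sin_ofReal_re] at hre him
    exact ⟨hpos, him, hre⟩
  have hr : ∀ t, 0 < r t := fun t => (hkey t).1
  have hsin : ∀ t, u t = r t * Real.sin (θ t) := fun t => (hkey t).2.1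
  have hcos : ∀ t, deriv u t = r t * Real.cos (θ t) := fun t => (hkey t).2.2
  have hperd : ∀ t, deriv u (t + L) = deriv u t := by
    intro t
    have hfun : (fun s => u (s + L)) = u := funext hper
    calc deriv u (t + L) = deriv (fun s => u (s + L)) t := by rw [deriv_comp_add_const]
      _ = deriv u t := by rw [hfun]
  have huL : u L = u 0 := by simpa using hper 0
  have hdL : deriv u L = deriv u 0 := by simpa using hperd 0
  have hΔ : ∃ k : ℤ, θ L - θ 0 = 2 * π * k := by
    have h1 := hlift L
    have h2 := hlift 0
    have hf : (Complex.ofReal (deriv u L) + Complex.I * Complex.ofReal (u L)) =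
        (Complex.ofReal (deriv u 0) + Complex.I * Complex.ofReal (u 0)) := by rw [huL, hdL]
    rw [hf] at h1
    have hexp := h1.symm.trans h2
    have hAne : ((‖Complex.ofReal (deriv u 0) + Complex.I * Complex.ofReal (u 0)‖ : ℝ) : ℂ) ≠ 0 := by
      have := hr 0
      rw [hrdef] at this
      exact_mod_cast ne_of_gt this
    have h3 := mul_left_cancel₀ hAne hexp
    obtain ⟨n, hn⟩ := Complex.exp_eq_exp_iff_exists_int.1 h3
    have h4 : Complex.I * ((θ L : ℝ) : ℂ) = Complex.I * (((θ 0 : ℝ) : ℂ) + n * (2*π)) := by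
      rw [hn]; ring
    have h5 := mul_left_cancel₀ Complex.I_ne_zero h4
    have h6 : ((θ L : ℝ) : ℂ) = ((θ 0 + n * (2*π) : ℝ) : ℂ) := by push_cast; exact h5
    have h7 : θ L = θ 0 + n * (2*π) := by exact_mod_cast h6
    exact ⟨n, by rw [h7]; ring⟩
  have hfinIcc := Stmt3Aux.zeros_finite hud hsimple 0 L
  by_cases h0 : u 0 = 0
  · -- zero at the endpoint
    have huL0 : u L = 0 := by rw [huL]; exact h0
    set mid := {t | t ∈ Set.Ioo 0 L ∧ u t = 0} with hmiddef
    have hfinmid : mid.Finite := hfinIcc.subset (fun t ht => ⟨⟨ht.1.1.le, ht.1.2.le⟩, ht.2⟩)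
    have hIco : {t : ℝ | t ∈ Set.Ico (0:ℝ) L ∧ u t = 0} = insert 0 mid := by
      ext t
      constructor
      · rintro ⟨⟨h1, h2⟩, h3⟩
        rcases eq_or_lt_of_le h1 with h | h
        · exact Or.inl h.symm
        · exact Or.inr ⟨⟨h, h2⟩, h3⟩
      · rintro (rfl | ⟨⟨h1, h2⟩, h3⟩)
        · exact ⟨⟨le_rfl, hL⟩, h0⟩
        · exact ⟨⟨h1.le, h2⟩, h3⟩
    have hIoc : {t : ℝ | t ∈ Set.Ioc (0:ℝ) L ∧ u t = 0} = insert L mid := by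
      ext t
      constructor
      · rintro ⟨⟨h1, h2⟩, h3⟩
        rcases eq_or_lt_of_le h2 with h | h
        · exact Or.inl h
        · exact Or.inr ⟨⟨h1, h⟩, h3⟩
      · rintro (rfl | ⟨⟨h1, h2⟩, h3⟩)
        · exact ⟨⟨hL, le_rfl⟩, huL0⟩
        · exact ⟨⟨h1, h2.le⟩, h3⟩
    have h0nm : (0:ℝ) ∉ mid := fun h => lt_irrefl 0 h.1.1
    have hLnm : L ∉ mid := fun h => lt_irrefl L h.1.2
    have hfinIoc : ({t : ℝ | t ∈ Set.Ioc (0:ℝ) L ∧ u t = 0}).Finite :=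
      hfinIcc.subset (fun t ht => ⟨⟨ht.1.1.le, ht.1.2⟩, ht.2⟩)
    have hcard : ({t : ℝ | t ∈ Set.Ioc (0:ℝ) L ∧ u t = 0}).ncard = 2*p := by
      rw [hIoc, Set.ncard_insert_of_notMem hLnm hfinmid]
      rw [hIco, Set.ncard_insert_of_notMem h0nm hfinmid] at hzeros
      omega
    have hM := Stmt3Aux.main_count hud hθ hr hsin hcos hsimple (2*p) 0 L hL.le h0 huL0
      hfinIoc hcard
    push_cast at hM
    linarith
  · -- no zero at the endpoint
    have huLne : u L ≠ 0 := by rw [huL]; exact h0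
    set S := {t : ℝ | t ∈ Set.Ico (0:ℝ) L ∧ u t = 0} with hSdef
    have hfinS : S.Finite := hfinIcc.subset (fun t ht => ⟨⟨ht.1.1, ht.1.2.le⟩, ht.2⟩)
    rcases S.eq_empty_or_nonempty with hSe | hSne
    · have hp : p = 0 := by
        rw [hSe, Set.ncard_empty] at hzeros; omega
      have hmid : ∀ t, 0 ≤ t → t ≤ L → u t ≠ 0 := by
        intro t h1 h2 h3
        rcases eq_or_lt_of_le h2 with h | h
        · exact huLne (h ▸ h3)
        · exact (Set.notMem_empty t) (hSe ▸ (⟨⟨h1, h⟩, h3⟩ : t ∈ S))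
      have hD := Stmt3Aux.segmentD hθ hr hsin hL.le hmid
      obtain ⟨k, hk⟩ := hΔ
      have hk0 : k = 0 := by
        by_contra hkne
        have h1 : (1:ℝ) ≤ |(k:ℝ)| := by
          have := Int.one_le_abs (by omega : k ≠ 0)
          calc (1:ℝ) ≤ ((|k| : ℤ) : ℝ) := by exact_mod_cast this
            _ = |(k:ℝ)| := by push_cast; ring
        rw [hk, abs_mul, abs_of_pos (by linarith : (0:ℝ) < 2*π)] at hD
        nlinarith
      rw [hp, hk, hk0]
      norm_num
    · have hcmem := hSne.csInf_mem hfinS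
      have hdmem := hSne.csSup_mem hfinS
      set c := sInf S with hcdef
      set d := sSup S with hddef
      have hc0 : 0 < c := lt_of_le_of_ne hcmem.1.1 (fun h => h0 (h ▸ hcmem.2))
      have hcL : c < L := hcmem.1.2
      have hdL : d < L := hdmem.1.2
      have hcd : c ≤ d := csInf_le_csSup hSne hfinS.bddBelow hfinS.bddAbove
      have hBmid : ∀ t, 0 ≤ t → t < c → u t ≠ 0 := fun t h1 h2 h3 =>
        absurd (csInf_le hfinS.bddBelow ⟨⟨h1, lt_trans h2 hcL⟩, h3⟩) (not_le.2 h2)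
      have hB := Stmt3Aux.segmentB hud hθ hr hsin hcos hsimple hc0 hcmem.2 hBmid
      have hCmid : ∀ t, d < t → t ≤ L → u t ≠ 0 := by
        intro t h1 h2 h3
        rcases eq_or_lt_of_le h2 with h | h
        · exact huLne (h ▸ h3)
        · exact absurd (le_csSup hfinS.bddAbove ⟨⟨le_trans hcmem.1.1 (le_trans hcd h1.le), h⟩, h3⟩)
            (not_le.2 h1)
      have hC := Stmt3Aux.segmentC hud hθ hr hsin hcos hsimple hdL hdmem.2 hCmid
      set S' := {t : ℝ | t ∈ Set.Ioc c d ∧ u t = 0} with hS'def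
      have hfinS' : S'.Finite := hfinIcc.subset
        (fun t ht => ⟨⟨le_trans hc0.le ht.1.1.le, le_trans ht.1.2 hdL.le⟩, ht.2⟩)
      have hSS : S = insert c S' := by
        ext t
        constructor
        · rintro ⟨⟨h1, h2⟩, h3⟩
          have hct : c ≤ t := csInf_le hfinS.bddBelow ⟨⟨h1, h2⟩, h3⟩
          have htd : t ≤ d := le_csSup hfinS.bddAbove ⟨⟨h1, h2⟩, h3⟩
          rcases eq_or_lt_of_le hct with h | h
          · exact Or.inl h.symm
          · exact Or.inr ⟨⟨h, htd⟩, h3⟩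
        · rintro (rfl | ⟨⟨h1, h2⟩, h3⟩)
          · exact hcmem
          · exact ⟨⟨le_trans hc0.le h1.le, lt_of_le_of_lt h2 hdL⟩, h3⟩
      have hcnot : c ∉ S' := fun h => lt_irrefl c h.1.1
      have hp1 : 1 ≤ p := by
        by_contra h
        push_neg at h
        have hp0 : p = 0 := by omega
        rw [hp0, Nat.mul_zero, Set.ncard_eq_zero hfinS] at hzeros
        exact hSne.ne_empty hzeros
      have hcard' : S'.ncard = 2*p - 1 := by
        rw [hSS, Set.ncard_insert_of_notMem hcnot hfinS'] at hzeros
        omega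
      have hM := Stmt3Aux.main_count hud hθ hr hsin hcos hsimple (2*p-1) c d hcd hcmem.2 hdmem.2
        hfinS' hcard'
      have hNcast : ((2*p-1:ℕ):ℝ) = 2*(p:ℝ) - 1 := by
        rw [Nat.cast_sub (by omega : 1 ≤ 2*p)]
        push_cast
        ring
      rw [hNcast] at hM
      obtain ⟨k, hk⟩ := hΔ
      have hlow : (2*(p:ℝ) - 1) * π < θ L - θ 0 := by linarith [hB.1, hC.1]
      have hhigh : θ L - θ 0 < (2*(p:ℝ) + 1) * π := by linarith [hB.2, hC.2]
      rw [hk] at hlow hhigh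
      have h1 : (2*(p:ℝ) - 1) * π < (2*(k:ℝ)) * π := by linarith
      have h2 : (2*(k:ℝ)) * π < (2*(p:ℝ) + 1) * π := by linarith
      have h1' : 2*(p:ℝ) - 1 < 2*(k:ℝ) := (mul_lt_mul_iff_of_pos_right hπ).1 h1
      have h2' : 2*(k:ℝ) < 2*(p:ℝ) + 1 := (mul_lt_mul_iff_of_pos_right hπ).1 h2
      have h1'' : 2*(p:ℤ) - 1 < 2*k := by exact_mod_cast h1'
      have h2'' : 2*k < 2*(p:ℤ) + 1 := by exact_mod_cast h2'
      have hkp : k = p := by omega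
      rw [hk, hkp]
      push_cast
      ring
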